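/- arXiv:2111.02471 — 5 statements merged into one kernel-verified Lean document; each statement's English description precedes it below -/
import Mathlib

section
/- Let G be a simple graph on a finite vertex type V and suppose G is preconnected. Let v ∈ V. Then the simple graph G_v on the subtype V \ {v}, in which distinct vertices u and x are adjacent if and only if (G.Adj u x) or (G.Adj u v and G.Adj x v), is preconnected. -/
/-- The star-clique operation at `v`: delete `v` and all edges at `v`, and join every pair of
distinct former neighbors of `v` by an edge (keeping all edges of `G` not incident to `v`). -/
def starClique {V : Type*} (G : SimpleGraph V) (v : V) :
    SimpleGraph {u : V // u ≠ v} where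
  Adj u x := u ≠ x ∧ (G.Adj ↑u ↑x ∨ (G.Adj ↑u v ∧ G.Adj ↑x v))
  symm := by
    constructor
    rintro u x ⟨h1, h2⟩
    refine ⟨h1.symm, ?_⟩
    rcases h2 with h | ⟨ha, hb⟩
    · exact Or.inl h.symm
    · exact Or.inr ⟨hb, ha⟩
  loopless := ⟨fun u h => h.1 rfl⟩

/-!
Collapse `v` onto one of its neighbours `w` (which exists by connectivity as soon as there is a
vertex other than `v`). Every edge of `G` is sent to an edge of `G_v` or to a single vertex: an
edge at `v` goes to two former neighbours of `v`, which `G_v` joins. So the collapse carries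
walks of `G` to walks of `G_v`, and it fixes every vertex other than `v`.
-/

namespace SimpleGraph

theorem Reachable.of_adj_imp_reachable {V W : Type*} {G : SimpleGraph V} {H : SimpleGraph W}
    (f : V → W) (hf : ∀ x y, G.Adj x y → H.Reachable (f x) (f y)) {a b : V}
    (h : G.Reachable a b) : H.Reachable (f a) (f b) := by
  rw [reachable_eq_reflTransGen] at h ⊢
  exact Relation.ReflTransGen.lift' f (fun x y hxy => by
    simpa only [reachable_eq_reflTransGen] using hf x y hxy) a b h

end SimpleGraph

section StarClique

variable {V : Type*} {G : SimpleGraph V} {v : V}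

theorem starClique_adj_of_adj {a b : {u : V // u ≠ v}} (h : G.Adj a b) :
    (starClique G v).Adj a b :=
  ⟨fun hab => h.ne (congrArg Subtype.val hab), Or.inl h⟩

theorem starClique_reachable_of_adj_of_adj {a b : {u : V // u ≠ v}} (ha : G.Adj a v)
    (hb : G.Adj b v) : (starClique G v).Reachable a b := by
  by_cases hab : a = b
  · exact hab ▸ SimpleGraph.Reachable.refl _
  · exact SimpleGraph.Adj.reachable ⟨hab, Or.inr ⟨ha, hb⟩⟩

variable (v) in
open Classical in
noncomputable def starCliqueCollapse (w : {u : V // u ≠ v}) (x : V) : {u : V // u ≠ v} :=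
  if hx : x = v then w else ⟨x, hx⟩

theorem starCliqueCollapse_of_ne (w : {u : V // u ≠ v}) {x : V} (hx : x ≠ v) :
    starCliqueCollapse v w x = ⟨x, hx⟩ :=
  dif_neg hx

theorem starCliqueCollapse_self (w : {u : V // u ≠ v}) : starCliqueCollapse v w v = w :=
  dif_pos rfl

theorem starClique_reachable_collapse_of_adj {w : {u : V // u ≠ v}} (hw : G.Adj w v)
    {x y : V} (hxy : G.Adj x y) :
    (starClique G v).Reachable (starCliqueCollapse v w x) (starCliqueCollapse v w y) := by
  by_cases hx : x = v
  · subst hx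
    have hy : y ≠ x := hxy.ne'
    rw [starCliqueCollapse_self, starCliqueCollapse_of_ne w hy]
    exact starClique_reachable_of_adj_of_adj hw hxy.symm
  by_cases hy : y = v
  · subst hy
    rw [starCliqueCollapse_self, starCliqueCollapse_of_ne w hx]
    exact starClique_reachable_of_adj_of_adj hxy hw
  rw [starCliqueCollapse_of_ne w hx, starCliqueCollapse_of_ne w hy]
  exact (starClique_adj_of_adj hxy).reachable

end StarClique

theorem starClique_preconnected_general {V : Type*} (G : SimpleGraph V)
    (hG : G.Preconnected) (v : V) : (starClique G v).Preconnected := by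
  intro u x
  obtain ⟨p⟩ := hG v u
  have hp : ¬p.Nil := SimpleGraph.Walk.not_nil_of_ne u.2.symm
  let w : {u : V // u ≠ v} := ⟨p.snd, (p.adj_snd hp).ne'⟩
  have hw : G.Adj w v := (p.adj_snd hp).symm
  have h := (hG u x).of_adj_imp_reachable (starCliqueCollapse v w)
    (fun _ _ => starClique_reachable_collapse_of_adj hw)
  rwa [starCliqueCollapse_of_ne w u.2, starCliqueCollapse_of_ne w x.2] at h

/-- If `G` is a preconnected simple graph on a finite vertex type `V` and `v ∈ V`, then the
graph obtained from `G` by the star-clique operation at `v` is preconnected. -/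
theorem starClique_preconnected {V : Type*} [Fintype V] (G : SimpleGraph V)
    (hG : G.Preconnected) (v : V) : (starClique G v).Preconnected :=
  starClique_preconnected_general G hG v
end

section
/- Let (G, w) be an edge-weighted simple graph on a finite type V, let g be a spline on (G, w), and let u, x be distinct vertices. Then for every path p from u to x in G, the gcd of the weights of the edges of p divides g(u) − g(x); consequently D(u, x) divides g(u) − g(x), where D(u, x) is the lcm over all paths p from u to x of the gcd of the weights of the edges of p. -/
/-- An integer spline on the edge-weighted graph `(G, w)`: a vertex labeling `g : V → ℤ` such
that for every edge `{u, x}` of `G`, the weight `w {u, x}` divides `g u - g x` in `ℤ`. -/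
def IsSpline {V : Type*} (G : SimpleGraph V) (w : Sym2 V → ℕ) (g : V → ℤ) : Prop :=
  ∀ u x : V, G.Adj u x → (w s(u, x) : ℤ) ∣ g u - g x

/-- `D_G(u, x)`: the lcm, over all paths `p` from `u` to `x` in `G`, of the gcd of the weights
of the edges of `p` (the lcm of the empty set is `1`). -/
noncomputable def pathLcm {V : Type*} [Fintype V] [DecidableEq V] (G : SimpleGraph V)
    [DecidableRel G.Adj] (w : Sym2 V → ℕ) (u x : V) : ℕ :=
  Finset.univ.lcm (fun p : G.Path u x => (p.1.edges.map w).foldr Nat.gcd 0)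

namespace IsSpline

variable {V : Type*} {G : SimpleGraph V} {w : Sym2 V → ℕ} {g : V → ℤ}

theorem foldr_gcd_edges_dvd (hg : IsSpline G w g) {u x : V} (p : G.Walk u x) :
    (((p.edges.map w).foldr Nat.gcd 0 : ℕ) : ℤ) ∣ g u - g x := by
  induction p with
  | nil => simp
  | @cons a b c hab p ih =>
    set d := (p.edges.map w).foldr Nat.gcd 0
    have hd_edge : ((Nat.gcd (w s(a, b)) d : ℕ) : ℤ) ∣ g a - g b :=
      (Int.natCast_dvd_natCast.mpr (Nat.gcd_dvd_left _ _)).trans (hg a b hab)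
    have hd_rest : ((Nat.gcd (w s(a, b)) d : ℕ) : ℤ) ∣ g b - g c :=
      (Int.natCast_dvd_natCast.mpr (Nat.gcd_dvd_right _ _)).trans ih
    simpa only [SimpleGraph.Walk.edges_cons, List.map_cons, List.foldr_cons, sub_add_sub_cancel]
      using dvd_add hd_edge hd_rest

theorem pathLcm_dvd [Fintype V] [DecidableEq V] [DecidableRel G.Adj] (hg : IsSpline G w g)
    (u x : V) : ((pathLcm G w u x : ℕ) : ℤ) ∣ g u - g x :=
  Int.natCast_dvd.mpr <| Finset.lcm_dvd fun p _ =>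
    Int.natCast_dvd.mp (hg.foldr_gcd_edges_dvd p.1)

end IsSpline

theorem path_gcd_dvd_spline_diff_general {V : Type*} [Fintype V] [DecidableEq V]
    (G : SimpleGraph V) [DecidableRel G.Adj] (w : Sym2 V → ℕ)
    (g : V → ℤ) (hg : IsSpline G w g) (u x : V) :
    (∀ p : G.Path u x, (((p.1.edges.map w).foldr Nat.gcd 0 : ℕ) : ℤ) ∣ g u - g x) ∧
      ((pathLcm G w u x : ℕ) : ℤ) ∣ g u - g x :=
  ⟨fun p => hg.foldr_gcd_edges_dvd p.1, hg.pathLcm_dvd u x⟩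

/-- If `g` is a spline on `(G, w)` and `u ≠ x`, then for every path `p` from `u` to `x` the gcd
of the weights of the edges of `p` divides `g u - g x`; consequently `D(u, x)` divides
`g u - g x`. -/
theorem path_gcd_dvd_spline_diff {V : Type*} [Fintype V] [DecidableEq V]
    (G : SimpleGraph V) [DecidableRel G.Adj] (w : Sym2 V → ℕ)
    (hw : ∀ e ∈ G.edgeSet, 0 < w e)
    (g : V → ℤ) (hg : IsSpline G w g) (u x : V) (hux : u ≠ x) :
    (∀ p : G.Path u x, (((p.1.edges.map w).foldr Nat.gcd 0 : ℕ) : ℤ) ∣ g u - g x) ∧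
      ((pathLcm G w u x : ℕ) : ℤ) ∣ g u - g x :=
  path_gcd_dvd_spline_diff_general G w g hg u x
end

section
/- Let (G, w) be a connected edge-weighted simple graph on a finite type V and let u, x be two distinct vertices. Then { (g(u), g(x)) : g a spline on (G, w) } = { (a, b) ∈ ℤ × ℤ : D(u, x) divides a − b }, where D(u, x) is the lcm over all paths p from u to x of the gcd of the weights of the edges of p. In particular, the projection g ↦ (g(u), g(x)) is a surjective ℤ-module homomorphism from S_G onto the spline module of the single edge {u, x} weighted by D(u, x). -/
open SimpleGraph Finset

/-- gcd of weights of a list of edges. -/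
def gcdW {V : Type*} (w : Sym2 V → ℕ) (l : List (Sym2 V)) : ℕ :=
  (l.map w).foldr Nat.gcd 0

lemma gcdW_dvd {V : Type*} (w : Sym2 V → ℕ) {l : List (Sym2 V)} {e : Sym2 V}
    (he : e ∈ l) : gcdW w l ∣ w e := by
  induction l with
  | nil => simp at he
  | cons a t ih =>
      rcases List.mem_cons.mp he with rfl | he'
      · exact Nat.gcd_dvd_left _ _
      · exact (Nat.gcd_dvd_right _ _).trans (ih he')

lemma dvd_gcdW {V : Type*} (w : Sym2 V → ℕ) {c : ℕ} {l : List (Sym2 V)}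
    (h : ∀ e ∈ l, c ∣ w e) : c ∣ gcdW w l := by
  induction l with
  | nil => simp [gcdW]
  | cons a t ih =>
      exact Nat.dvd_gcd (h a (by simp)) (ih fun e he => h e (by simp [he]))

lemma spline_walk_dvd {V : Type*} {G : SimpleGraph V} {w : Sym2 V → ℕ} {g : V → ℤ}
    (hg : IsSpline G w g) {s t : V} (W : G.Walk s t) :
    (gcdW w W.edges : ℤ) ∣ g s - g t := by
  induction W with
  | nil => simp [gcdW]
  | @cons s b t h W ih =>
      have h1 : (gcdW w (Walk.cons h W).edges : ℤ) ∣ g s - g b := by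
        refine dvd_trans ?_ (hg s b h)
        exact_mod_cast Int.natCast_dvd_natCast.mpr (Nat.gcd_dvd_left _ _)
      have h2 : (gcdW w (Walk.cons h W).edges : ℤ) ∣ g b - g t := by
        refine dvd_trans ?_ ih
        exact_mod_cast Int.natCast_dvd_natCast.mpr (Nat.gcd_dvd_right _ _)
      simpa [sub_add_sub_cancel] using dvd_add h1 h2

lemma pow_dvd_lcm2 {q c m n : ℕ} (hq : q.Prime) (h : q ^ c ∣ Nat.lcm m n) :
    q ^ c ∣ m ∨ q ^ c ∣ n := by
  rcases eq_or_ne m 0 with rfl | hm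
  · exact Or.inl (dvd_zero _)
  rcases eq_or_ne n 0 with rfl | hn
  · exact Or.inr (dvd_zero _)
  have hl : Nat.lcm m n ≠ 0 := Nat.lcm_ne_zero hm hn
  have := (hq.pow_dvd_iff_le_factorization hl).mp h
  rw [Nat.factorization_lcm hm hn, Finsupp.sup_apply, le_sup_iff] at this
  rcases this with h' | h'
  · exact Or.inl ((hq.pow_dvd_iff_le_factorization hm).mpr h')
  · exact Or.inr ((hq.pow_dvd_iff_le_factorization hn).mpr h')

lemma pow_dvd_finset_lcm {ι : Type*} {s : Finset ι} {f : ι → ℕ} {q c : ℕ}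
    (hq : q.Prime) (h : q ^ c ∣ s.lcm f) : (∃ i ∈ s, q ^ c ∣ f i) ∨ q ^ c ∣ 1 := by
  classical
  induction s using Finset.induction with
  | empty => right; simpa using h
  | insert _ _ hnotmem ih =>
      rw [Finset.lcm_insert, lcm_eq_nat_lcm] at h
      rcases pow_dvd_lcm2 hq h with h' | h'
      · exact Or.inl ⟨_, Finset.mem_insert_self _ _, h'⟩
      · rcases ih h' with ⟨i, hi, hd⟩ | h'' 
        · exact Or.inl ⟨i, Finset.mem_insert_of_mem hi, hd⟩
        · exact Or.inr h''

lemma pathLcm_ne_zero {V : Type*} [Fintype V] [DecidableEq V] (G : SimpleGraph V)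
    [DecidableRel G.Adj] (w : Sym2 V → ℕ) (hw : ∀ e ∈ G.edgeSet, 0 < w e)
    {u x : V} (hux : u ≠ x) : pathLcm G w u x ≠ 0 := by
  intro h
  rw [pathLcm, Finset.lcm_eq_zero_iff] at h
  obtain ⟨p, -, hp0⟩ := h
  have hne : p.1.edges ≠ [] := fun hnil =>
    hux (SimpleGraph.Walk.eq_of_length_eq_zero
      (by rw [← SimpleGraph.Walk.length_edges, hnil]; rfl))
  obtain ⟨e, he⟩ := List.exists_mem_of_ne_nil _ hne
  have hd : gcdW w p.1.edges ∣ w e := gcdW_dvd w he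
  rw [show gcdW w p.1.edges = 0 from hp0] at hd
  exact absurd (Nat.eq_zero_of_zero_dvd hd).symm (hw e (p.1.edges_subset_edgeSet he)).ne

lemma pathLcm_self {V : Type*} [Fintype V] [DecidableEq V] (G : SimpleGraph V)
    [DecidableRel G.Adj] (w : Sym2 V → ℕ) (x : V) : pathLcm G w x x = 0 := by
  have := Finset.dvd_lcm (f := fun p : G.Path x x => (p.1.edges.map w).foldr Nat.gcd 0)
    (Finset.mem_univ (⟨SimpleGraph.Walk.nil, SimpleGraph.Walk.IsPath.nil⟩ : G.Path x x))
  exact Nat.eq_zero_of_zero_dvd this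

lemma pathLcm_adj_dvd {V : Type*} [Fintype V] [DecidableEq V] (G : SimpleGraph V)
    [DecidableRel G.Adj] (w : Sym2 V → ℕ) {a b x : V} (hab : G.Adj a b) {q c : ℕ}
    (hq : q.Prime) (hcw : q ^ c ∣ w s(a, b)) (hcD : q ^ c ∣ pathLcm G w b x) :
    q ^ c ∣ pathLcm G w a x := by
  rcases pow_dvd_finset_lcm hq hcD with ⟨p, -, hp⟩ | h1
  · have hp' : q ^ c ∣ gcdW w p.1.edges := hp
    have hall : ∀ e ∈ p.1.edges, q ^ c ∣ w e := fun e he => hp'.trans (gcdW_dvd w he)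
    by_cases ha : a ∈ p.1.support
    · refine dvd_trans ?_ (Finset.dvd_lcm (Finset.mem_univ
        (⟨p.1.dropUntil a ha, p.2.dropUntil ha⟩ : G.Path a x)))
      exact dvd_gcdW w fun e he => hall e (SimpleGraph.Walk.edges_dropUntil_subset _ ha he)
    · refine dvd_trans ?_ (Finset.dvd_lcm (Finset.mem_univ
        (⟨SimpleGraph.Walk.cons hab p.1, p.2.cons ha⟩ : G.Path a x)))
      show q ^ c ∣ gcdW w (SimpleGraph.Walk.cons hab p.1).edges
      rw [SimpleGraph.Walk.edges_cons]
      exact Nat.dvd_gcd hcw (dvd_gcdW w hall)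
  · rw [Nat.dvd_one.mp h1]
    exact one_dvd _

def splineIdeal {V : Type*} (G : SimpleGraph V) (w : Sym2 V → ℕ) (u x : V) : Ideal ℤ where
  carrier := {t : ℤ | ∃ g : V → ℤ, IsSpline G w g ∧ g u = t ∧ g x = 0}
  zero_mem' := ⟨fun _ => 0, fun a b _ => by simp, rfl, rfl⟩
  add_mem' := by
    rintro s t ⟨g, hg, rfl, hgx⟩ ⟨g', hg', rfl, hg'x⟩
    refine ⟨g + g', fun a b h => ?_, rfl, by simp [hgx, hg'x]⟩
    have := dvd_add (hg a b h) (hg' a b h)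
    simpa [add_sub_add_comm] using this
  smul_mem' := by
    rintro c t ⟨g, hg, rfl, hgx⟩
    refine ⟨fun v => c * g v, fun a b h => ?_, rfl, by simp [hgx]⟩
    rw [← mul_sub]
    exact (hg a b h).mul_left c

lemma aux_mem {V : Type*} [Fintype V] [DecidableEq V] (G : SimpleGraph V)
    [DecidableRel G.Adj] (w : Sym2 V → ℕ) (hw : ∀ e ∈ G.edgeSet, 0 < w e)
    (u x : V) (hux : u ≠ x) {q : ℕ} (hq : q.Prime)
    (hqM : q ∣ ∏ e ∈ G.edgeFinset, w e) :
    ((ordCompl[q] (∏ e ∈ G.edgeFinset, w e) * pathLcm G w u x : ℕ) : ℤ) ∈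
      splineIdeal G w u x := by
  set M := ∏ e ∈ G.edgeFinset, w e with hMdef
  set D := pathLcm G w u x with hDdef
  set k := D.factorization q with hkdef
  have hM0 : M ≠ 0 := by
    rw [hMdef]
    exact Finset.prod_ne_zero_iff.mpr fun e he =>
      (hw e (SimpleGraph.mem_edgeFinset.mp he)).ne'
  have hD0 : D ≠ 0 := pathLcm_ne_zero G w hw hux
  have hMC0 : ordCompl[q] M ≠ 0 := (Nat.ordCompl_pos q hM0).ne'
  -- key divisibility fact
  have hkey : ∀ a b : V, G.Adj a b → ¬ q ^ (k + 1) ∣ w s(a, b) →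
      w s(a, b) ∣ ordCompl[q] M * D := by
    intro a b hab hnd
    have hwe0 : w s(a, b) ≠ 0 :=
      (hw _ ((G.mem_edgeSet).mpr hab)).ne'
    have hwM : w s(a, b) ∣ M :=
      Finset.dvd_prod_of_mem w (SimpleGraph.mem_edgeFinset.mpr
        ((G.mem_edgeSet).mpr hab))
    have step1 : w s(a, b) ∣ q ^ k * ordCompl[q] M := by
      rw [← Nat.factorization_le_iff_dvd hwe0
        (mul_ne_zero (pow_ne_zero _ hq.pos.ne') hMC0), Finsupp.le_def]
      intro r
      rw [Nat.factorization_mul (pow_ne_zero _ hq.pos.ne') hMC0, Finsupp.add_apply,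
        hq.factorization_pow, Nat.factorization_ordCompl]
      by_cases hr : r = q
      · subst hr
        rw [Finsupp.single_eq_same, Finsupp.erase_same]
        have : ¬ (k + 1 ≤ (w s(a, b)).factorization r) := by
          rw [← hq.pow_dvd_iff_le_factorization hwe0]; exact hnd
        omega
      · rw [Finsupp.single_eq_of_ne' (Ne.symm hr), Finsupp.erase_ne hr]
        have := Finsupp.le_def.mp ((Nat.factorization_le_iff_dvd hwe0 hM0).mpr hwM) r
        omega
    exact step1.trans (by rw [mul_comm]; exact Nat.mul_dvd_mul_left _ (Nat.ordProj_dvd D q))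
  refine ⟨fun v => if q ^ (k + 1) ∣ pathLcm G w v x then 0
    else ((ordCompl[q] M * D : ℕ) : ℤ), ?_, ?_, ?_⟩
  · intro a b hab
    by_cases h1 : q ^ (k + 1) ∣ pathLcm G w a x <;>
      by_cases h2 : q ^ (k + 1) ∣ pathLcm G w b x
    · simp [h1, h2]
    · -- a divisible, b not
      have hnd : ¬ q ^ (k + 1) ∣ w s(a, b) := by
        intro hc
        exact h2 (pathLcm_adj_dvd G w hab.symm hq (by rwa [← Sym2.eq_swap]) h1)
      simp only [if_pos h1, if_neg h2, zero_sub, dvd_neg]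
      exact Int.natCast_dvd_natCast.mpr (hkey a b hab hnd)
    · -- b divisible, a not
      have hnd : ¬ q ^ (k + 1) ∣ w s(a, b) := by
        intro hc
        exact h1 (pathLcm_adj_dvd G w hab hq hc h2)
      simp only [if_neg h1, if_pos h2, sub_zero]
      exact Int.natCast_dvd_natCast.mpr (hkey a b hab hnd)
    · simp [h1, h2]
  · have : ¬ q ^ (k + 1) ∣ D := by
      rw [hq.pow_dvd_iff_le_factorization hD0]
      omega
    simp only [← hDdef, if_neg this]
  · simp [pathLcm_self G w x]

/-- For a connected edge-weighted graph `(G, w)` and distinct vertices `u, x`, the set of pairs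
`(g u, g x)` over all splines `g` equals `{(a, b) : D(u, x) ∣ a - b}`; in particular the
projection `g ↦ (g u, g x)` maps `S_G` onto the spline module of a single edge `{u, x}` of
weight `D(u, x)`. -/
theorem spline_pair_set_eq {V : Type*} [Fintype V] [DecidableEq V]
    (G : SimpleGraph V) [DecidableRel G.Adj] (hG : G.Connected) (w : Sym2 V → ℕ)
    (hw : ∀ e ∈ G.edgeSet, 0 < w e) (u x : V) (hux : u ≠ x) :
    {p : ℤ × ℤ | ∃ g : V → ℤ, IsSpline G w g ∧ g u = p.1 ∧ g x = p.2} =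
      {p : ℤ × ℤ | ((pathLcm G w u x : ℕ) : ℤ) ∣ p.1 - p.2} := by
  have hD0 : pathLcm G w u x ≠ 0 := pathLcm_ne_zero G w hw hux
  ext ⟨a, b⟩
  simp only [Set.mem_setOf_eq]
  constructor
  · rintro ⟨g, hg, rfl, rfl⟩
    have h1 : ∀ p : G.Path u x,
        ((p.1.edges.map w).foldr Nat.gcd 0) ∣ (g u - g x).natAbs := by
      intro p
      have := Int.natAbs_dvd_natAbs.mpr (spline_walk_dvd hg p.1)
      simpa [gcdW] using this
    have hlcm : pathLcm G w u x ∣ (g u - g x).natAbs :=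
      Finset.lcm_dvd fun p _ => h1 p
    exact Int.dvd_natAbs.mp (Int.natCast_dvd_natCast.mpr hlcm)
  · intro hdvd
    have hDmem : ((pathLcm G w u x : ℕ) : ℤ) ∈ splineIdeal G w u x := by
      set M := ∏ e ∈ G.edgeFinset, w e with hMdef
      by_cases hM1 : M = 1
      · refine ⟨fun v => if v = u then ((pathLcm G w u x : ℕ) : ℤ) else 0, ?_,
          by simp, by simp only []; rw [if_neg (show ¬ x = u from fun h => hux h.symm)]⟩
        intro a' b' h
        have hw1 : w s(a', b') = 1 := Nat.dvd_one.mp (hM1 ▸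
          Finset.dvd_prod_of_mem w (SimpleGraph.mem_edgeFinset.mpr
            ((G.mem_edgeSet).mpr h)))
        rw [hw1]
        exact one_dvd _
      · obtain ⟨q0, hq0, hq0M⟩ := Nat.exists_prime_and_dvd hM1
        set J := splineIdeal G w u x with hJdef
        set m := Submodule.IsPrincipal.generator J with hmdef
        have hmem : ∀ q, q.Prime → q ∣ M →
            m ∣ ((ordCompl[q] M * pathLcm G w u x : ℕ) : ℤ) := fun q hq hqM =>
          (Submodule.IsPrincipal.mem_iff_generator_dvd J).mp
            (aux_mem G w hw u x hux hq hqM)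
        have hM0 : M ≠ 0 := by
          rw [hMdef]
          exact Finset.prod_ne_zero_iff.mpr fun e he =>
            (hw e (SimpleGraph.mem_edgeFinset.mp he)).ne'
        have hm0 : m ≠ 0 := by
          intro h0
          have := hmem q0 hq0 hq0M
          rw [h0] at this
          have h00 := zero_dvd_iff.mp this
          have : ordCompl[q0] M * pathLcm G w u x ≠ 0 :=
            mul_ne_zero (Nat.ordCompl_pos q0 hM0).ne' hD0
          exact this (by exact_mod_cast h00)
        have hnD : m.natAbs ∣ pathLcm G w u x := by
          have hn0 : m.natAbs ≠ 0 := Int.natAbs_ne_zero.mpr hm0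
          rw [← Nat.factorization_le_iff_dvd hn0 hD0, Finsupp.le_def]
          intro r
          by_cases hr : r.Prime
          · obtain ⟨q, hq, hqM, hqr⟩ : ∃ q, q.Prime ∧ q ∣ M ∧ (r ∣ M → q = r) := by
              by_cases h : r ∣ M
              · exact ⟨r, hr, h, fun _ => rfl⟩
              · exact ⟨q0, hq0, hq0M, fun hh => absurd hh h⟩
            have hdv : m.natAbs ∣ ordCompl[q] M * pathLcm G w u x := by
              have := Int.natAbs_dvd_natAbs.mpr (hmem q hq hqM)
              rwa [Int.natAbs_natCast] at this
            have hfact := Finsupp.le_def.mp ((Nat.factorization_le_iff_dvd hn0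
              (mul_ne_zero (Nat.ordCompl_pos q hM0).ne' hD0)).mpr hdv) r
            rw [Nat.factorization_mul (Nat.ordCompl_pos q hM0).ne' hD0,
              Finsupp.add_apply, Nat.factorization_ordCompl] at hfact
            have hz : (Finsupp.erase q M.factorization) r = 0 := by
              by_cases hrq : r = q
              · subst hrq; exact Finsupp.erase_same
              · rw [Finsupp.erase_ne hrq]
                apply Nat.factorization_eq_zero_of_not_dvd
                intro hrM
                exact hrq (hqr hrM).symm
            omega
          · simp [Nat.factorization_eq_zero_of_not_prime _ hr]
        exact (Submodule.IsPrincipal.mem_iff_generator_dvd J).mpr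
          (Int.natAbs_dvd.mp (Int.natCast_dvd_natCast.mpr hnD))
    obtain ⟨g0, hg0, hgu, hgx⟩ := hDmem
    obtain ⟨c, hc⟩ := hdvd
    refine ⟨fun v => c * g0 v + b, fun a' b' h => ?_, ?_, ?_⟩
    · have := (hg0 a' b' h).mul_left c
      have e : c * g0 a' + b - (c * g0 b' + b) = c * (g0 a' - g0 b') := by ring
      simp only [e]
      exact this
    · simp only [hgu]
      linarith [hc]
    · simp [hgx]
end

section
/- Let (G, w) be a connected edge-weighted simple graph on vertices enumerated v_1, …, v_n, and let 2 ≤ i ≤ n. Define L_i = lcm_{1 ≤ j ≤ i−1} D(v_i, v_j), where D(v_i, v_j) is the lcm over all paths p from v_i to v_j of the gcd of the weights of the edges of p. Then { g(v_i) : g a spline on (G, w) with g(v_j) = 0 for all 1 ≤ j ≤ i−1 } = L_i · ℤ, the set of integer multiples of L_i. -/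
namespace FlowupAux
set_option linter.unusedSectionVars false

/-- gcd of a list divides each member. -/
lemma listGcd_dvd_mem {l : List ℕ} {x : ℕ} (hx : x ∈ l) : l.foldr Nat.gcd 0 ∣ x := by
  induction l with
  | nil => cases hx
  | cons a l ih =>
    rcases List.mem_cons.mp hx with rfl | hx
    · exact Nat.gcd_dvd_left _ _
    · exact (Nat.gcd_dvd_right _ _).trans (ih hx)

lemma dvd_listGcd {l : List ℕ} {d : ℕ} (h : ∀ x ∈ l, d ∣ x) : d ∣ l.foldr Nat.gcd 0 := by
  induction l with
  | nil => exact dvd_zero d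
  | cons a l ih =>
    exact Nat.dvd_gcd (h a List.mem_cons_self) (ih fun x hx => h x (List.mem_cons_of_mem a hx))

lemma prime_pow_dvd_lcm₂ {p k A B : ℕ} (hp : p.Prime) (h : p ^ k ∣ Nat.lcm A B) :
    p ^ k ∣ A ∨ p ^ k ∣ B := by
  rcases eq_or_ne A 0 with rfl | hA
  · exact Or.inl (dvd_zero _)
  rcases eq_or_ne B 0 with rfl | hB
  · exact Or.inr (dvd_zero _)
  have hl : Nat.lcm A B ≠ 0 := Nat.lcm_ne_zero hA hB
  have hk : k ≤ (Nat.lcm A B).factorization p :=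
    (hp.pow_dvd_iff_le_factorization hl).mp h
  rw [Nat.factorization_lcm hA hB] at hk
  simp only [Finsupp.sup_apply, le_sup_iff] at hk
  rcases hk with hk | hk
  · exact Or.inl ((hp.pow_dvd_iff_le_factorization hA).mpr hk)
  · exact Or.inr ((hp.pow_dvd_iff_le_factorization hB).mpr hk)

lemma prime_pow_dvd_finset_lcm {ι : Type*} {p k : ℕ} (hp : p.Prime) (hk : 1 ≤ k)
    {s : Finset ι} {f : ι → ℕ} (h : p ^ k ∣ s.lcm f) : ∃ b ∈ s, p ^ k ∣ f b := by
  classical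
  induction s using Finset.induction_on with
  | empty =>
    simp only [Finset.lcm_empty] at h
    exact absurd (Nat.le_of_dvd one_pos h)
      (not_le.mpr (Nat.one_lt_pow (by omega) hp.one_lt))
  | @insert a s ha ih =>
    rw [Finset.lcm_insert] at h
    rcases prime_pow_dvd_lcm₂ hp h with h | h
    · exact ⟨a, Finset.mem_insert_self a s, h⟩
    · obtain ⟨b, hb, hbd⟩ := ih h
      exact ⟨b, Finset.mem_insert_of_mem hb, hbd⟩

variable {V : Type*} [Fintype V] [DecidableEq V] {G : SimpleGraph V} [DecidableRel G.Adj]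
  {w : Sym2 V → ℕ}

lemma spline_walk_dvd {g : V → ℤ} (hg : IsSpline G w g) {u x : V} (q : G.Walk u x) :
    (((q.edges.map w).foldr Nat.gcd 0 : ℕ) : ℤ) ∣ g u - g x := by
  induction q with
  | nil => simp
  | @cons u v x h q ih =>
    have h1 : ((((SimpleGraph.Walk.cons h q).edges.map w).foldr Nat.gcd 0 : ℕ) : ℤ) ∣ g u - g v := by
      refine dvd_trans ?_ (hg u v h)
      exact_mod_cast Int.natCast_dvd_natCast.mpr (listGcd_dvd_mem (by simp))
    have h2 : ((((SimpleGraph.Walk.cons h q).edges.map w).foldr Nat.gcd 0 : ℕ) : ℤ) ∣ g v - g x := by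
      refine dvd_trans ?_ ih
      refine Int.natCast_dvd_natCast.mpr (dvd_listGcd fun y hy => listGcd_dvd_mem ?_)
      simp only [SimpleGraph.Walk.edges_cons, List.map_cons]
      exact List.mem_cons_of_mem _ hy
    simpa using dvd_add h1 h2

lemma spline_pathLcm_dvd {g : V → ℤ} (hg : IsSpline G w g) (u x : V) :
    ((pathLcm G w u x : ℕ) : ℤ) ∣ g u - g x := by
  rw [Int.natCast_dvd]
  exact Finset.lcm_dvd fun q _ => Int.natCast_dvd.mp (spline_walk_dvd hg q.1)

lemma walk_gcd_pos (hw : ∀ e ∈ G.edgeSet, 0 < w e) {u x : V} (hux : u ≠ x) (q : G.Walk u x) :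
    0 < (q.edges.map w).foldr Nat.gcd 0 := by
  cases q with
  | nil => exact absurd rfl hux
  | @cons u v x h q =>
    simp only [SimpleGraph.Walk.edges_cons, List.map_cons, List.foldr_cons]
    have : 0 < w s(u, v) := hw _ (G.mem_edgeSet.mpr h)
    rcases Nat.eq_zero_or_pos (Nat.gcd (w s(u, v)) ((q.edges.map w).foldr Nat.gcd 0)) with h0 | h0
    · rw [Nat.gcd_eq_zero_iff] at h0; omega
    · exact h0

lemma pathLcm_ne_zero (hw : ∀ e ∈ G.edgeSet, 0 < w e) {u x : V} (hux : u ≠ x) :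
    pathLcm G w u x ≠ 0 := by
  intro h0
  rw [pathLcm, Finset.lcm_eq_zero_iff] at h0
  obtain ⟨q, -, hq⟩ := h0
  exact (walk_gcd_pos hw hux q).ne' (by simpa using hq)

lemma pathLcm_self (u : V) : pathLcm G w u u = 0 := by
  refine Nat.eq_zero_of_zero_dvd ?_
  have hd := Finset.dvd_lcm (f := fun p : G.Path u u => (p.1.edges.map w).foldr Nat.gcd 0)
    (Finset.mem_univ (SimpleGraph.Path.nil : G.Path u u))
  exact hd

/-- `P u` -/
noncomputable def P (G : SimpleGraph V) [DecidableRel G.Adj] (w : Sym2 V → ℕ) (S : Finset V)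
    (u : V) : ℕ := S.lcm (fun j => pathLcm G w u j)

lemma P_ne_zero (hw : ∀ e ∈ G.edgeSet, 0 < w e) {S : Finset V} {u : V} (hu : u ∉ S) :
    P G w S u ≠ 0 := by
  intro h0
  rw [P, Finset.lcm_eq_zero_iff] at h0
  obtain ⟨j, hj, hq⟩ := h0
  have huj : u ≠ j := fun h => hu (by rw [h]; exact hj)
  exact pathLcm_ne_zero hw huj (by simpa using hq)

lemma P_eq_zero {S : Finset V} {u : V} (hu : u ∈ S) : P G w S u = 0 := by
  have hd := Finset.dvd_lcm (f := fun j => pathLcm G w u j) hu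
  simp only [pathLcm_self] at hd
  exact Nat.eq_zero_of_zero_dvd hd

lemma pathLcm_dvd_W (hw : ∀ e ∈ G.edgeSet, 0 < w e) {u x : V} (hux : u ≠ x) :
    pathLcm G w u x ∣ ∏ e ∈ G.edgeFinset, w e := by
  refine Finset.lcm_dvd fun q _ => ?_
  cases hq : q.1 with
  | nil => exact absurd rfl hux
  | @cons u v x h q' =>
    simp only [SimpleGraph.Walk.edges_cons, List.map_cons, List.foldr_cons]
    refine dvd_trans (Nat.gcd_dvd_left _ _) (Finset.dvd_prod_of_mem w ?_)
    exact SimpleGraph.mem_edgeFinset.mpr (G.mem_edgeSet.mpr h)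

lemma P_dvd_W (hw : ∀ e ∈ G.edgeSet, 0 < w e) {S : Finset V} {u : V} (hu : u ∉ S) :
    P G w S u ∣ ∏ e ∈ G.edgeFinset, w e :=
  Finset.lcm_dvd fun j hj => pathLcm_dvd_W hw (fun h => hu (by rw [h]; exact hj))

/-- The key path-surgery lemma. -/
lemma key {S : Finset V} {u x : V} (hux : G.Adj u x) {p k : ℕ} (hp : p.Prime) (hk : 1 ≤ k)
    (hkx : p ^ k ∣ P G w S x) :
    p ^ min ((w s(u, x)).factorization p) k ∣ P G w S u := by
  obtain ⟨j0, hj0, hkj⟩ := prime_pow_dvd_finset_lcm hp hk hkx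
  obtain ⟨q0, -, hq0⟩ := prime_pow_dvd_finset_lcm hp hk (by simpa [pathLcm] using hkj)
  by_cases hmem : u ∈ q0.1.support
  · refine dvd_trans ?_ (Finset.dvd_lcm (f := fun j => pathLcm G w u j) hj0)
    refine dvd_trans ?_
      (Finset.dvd_lcm (f := fun q : G.Path u j0 => (q.1.edges.map w).foldr Nat.gcd 0)
        (Finset.mem_univ ⟨q0.1.dropUntil u hmem, q0.2.dropUntil hmem⟩))
    refine dvd_trans (dvd_trans (pow_dvd_pow p (min_le_right _ _)) hq0) ?_
    refine dvd_listGcd fun y hy => listGcd_dvd_mem ?_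
    simp only [List.mem_map] at hy ⊢
    obtain ⟨e, he, rfl⟩ := hy
    exact ⟨e, SimpleGraph.Walk.edges_dropUntil_subset _ hmem he, rfl⟩
  · refine dvd_trans ?_ (Finset.dvd_lcm (f := fun j => pathLcm G w u j) hj0)
    refine dvd_trans ?_
      (Finset.dvd_lcm (f := fun q : G.Path u j0 => (q.1.edges.map w).foldr Nat.gcd 0)
        (Finset.mem_univ ⟨SimpleGraph.Walk.cons hux q0.1, q0.2.cons hmem⟩))
    simp only [SimpleGraph.Walk.edges_cons, List.map_cons, List.foldr_cons]
    exact Nat.dvd_gcd ((pow_dvd_pow p (min_le_left _ _)).trans (Nat.ordProj_dvd _ _))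
      ((pow_dvd_pow p (min_le_right _ _)).trans hq0)

lemma exists_spline_prime (hw : ∀ e ∈ G.edgeSet, 0 < w e) (S : Finset V) {p : ℕ}
    (hp : p.Prime) :
    ∃ g : V → ℤ, IsSpline G w g ∧ (∀ j ∈ S, g j = 0) ∧ ∀ v0 ∉ S,
      g v0 = ((p ^ ((P G w S v0).factorization p) *
        ordCompl[p] (∏ e ∈ G.edgeFinset, w e) : ℕ) : ℤ) := by
  classical
  set W : ℕ := ∏ e ∈ G.edgeFinset, w e with hW
  have hWne : W ≠ 0 := by
    refine Finset.prod_ne_zero_iff.mpr fun e he => ?_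
    exact (hw e (SimpleGraph.mem_edgeFinset.mp he)).ne'
  set M : ℕ := ordCompl[p] W with hM
  set β : V → ℕ := fun u => (P G w S u).factorization p with hβ
  refine ⟨fun u => if u ∈ S then 0 else ((p ^ β u * M : ℕ) : ℤ), ?_, ?_, ?_⟩
  · -- the spline property
    have hmin : ∀ {y z : V}, G.Adj y z → y ∉ S →
        min ((w s(y, z)).factorization p) (β z) ≤ β y := by
      intro y z hyz hy
      rcases Nat.eq_zero_or_pos (β z) with h0 | h0
      · rcases Nat.eq_zero_or_pos ((w s(y, z)).factorization p) with h1 | h1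
        · simp [h0, h1]
        · -- use key with k = full exponent a, since p^a ∣ P z or β z = 0...
          -- here β z = 0; use k = a with p^a ∣ P z? not available; but min a 0 = 0
          simp [h0]
      · have hkx : p ^ β z ∣ P G w S z := Nat.ordProj_dvd _ _
        have := key hyz hp h0 hkx
        exact (hp.pow_dvd_iff_le_factorization (P_ne_zero hw hy)).mp this
    have hmix : ∀ {y z : V}, G.Adj y z → y ∉ S → z ∈ S →
        (w s(y, z)).factorization p ≤ β y := by
      intro y z hyz hy hz
      rcases Nat.eq_zero_or_pos ((w s(y, z)).factorization p) with h1 | h1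
      · omega
      · have hPz : P G w S z = 0 := P_eq_zero hz
        have hkx : p ^ ((w s(y, z)).factorization p) ∣ P G w S z := by
          rw [hPz]; exact dvd_zero _
        have := key hyz hp h1 hkx
        rw [min_self] at this
        exact (hp.pow_dvd_iff_le_factorization (P_ne_zero hw hy)).mp this
    intro u x hux
    have hwdvd : w s(u, x) ∣ W := Finset.dvd_prod_of_mem w
      (SimpleGraph.mem_edgeFinset.mpr (G.mem_edgeSet.mpr hux))
    have hmdvd : ordCompl[p] (w s(u, x)) ∣ M := Nat.ordCompl_dvd_ordCompl_of_dvd hwdvd p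
    have hwfact : p ^ ((w s(u, x)).factorization p) * ordCompl[p] (w s(u, x)) = w s(u, x) :=
      Nat.ordProj_mul_ordCompl_eq_self _ _
    by_cases hu : u ∈ S <;> by_cases hx : x ∈ S
    · simp [hu, hx]
    · -- u ∈ S, x ∉ S
      simp only [if_pos hu, if_neg hx, zero_sub, dvd_neg]
      have ha : (w s(u, x)).factorization p ≤ β x := by
        have := hmix hux.symm hx hu
        rwa [Sym2.eq_swap] at this
      refine Int.natCast_dvd_natCast.mpr ?_
      calc w s(u, x) = p ^ ((w s(u, x)).factorization p) * ordCompl[p] (w s(u, x)) := hwfact.symm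
        _ ∣ p ^ β x * M := Nat.mul_dvd_mul (pow_dvd_pow p ha) hmdvd
    · -- u ∉ S, x ∈ S
      simp only [if_neg hu, if_pos hx, sub_zero]
      have ha : (w s(u, x)).factorization p ≤ β u := hmix hux hu hx
      refine Int.natCast_dvd_natCast.mpr ?_
      calc w s(u, x) = p ^ ((w s(u, x)).factorization p) * ordCompl[p] (w s(u, x)) := hwfact.symm
        _ ∣ p ^ β u * M := Nat.mul_dvd_mul (pow_dvd_pow p ha) hmdvd
    · -- both outside S
      simp only [if_neg hu, if_neg hx]
      set a : ℕ := (w s(u, x)).factorization p with hadef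
      have h1 : min a (β x) ≤ β u := hmin hux hu
      have h2 : min a (β u) ≤ β x := by
        have := hmin hux.symm hx
        rwa [Sym2.eq_swap] at this
      by_cases hββ : β u = β x
      · rw [hββ, sub_self]; exact dvd_zero _
      · have hab : a ≤ β u ∧ a ≤ β x := by omega
        have : ((p ^ β u * M : ℕ) : ℤ) - ((p ^ β x * M : ℕ) : ℤ) =
            ((p : ℤ) ^ β u - (p : ℤ) ^ β x) * (M : ℤ) := by push_cast; ring
        rw [this, ← hwfact, Nat.cast_mul, Nat.cast_pow]
        exact mul_dvd_mul (dvd_sub (pow_dvd_pow (p : ℤ) hab.1) (pow_dvd_pow (p : ℤ) hab.2))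
          (Int.natCast_dvd_natCast.mpr hmdvd)
  · intro j hj; simp [hj]
  · intro v0 hv0; simp [hv0]; exact Or.inl rfl

lemma exists_spline_gcd (S : Finset V) (v0 : V) (s : Finset ℕ) (f : ℕ → ℕ)
    (h : ∀ b ∈ s, ∃ g : V → ℤ, IsSpline G w g ∧ (∀ j ∈ S, g j = 0) ∧ g v0 = (f b : ℤ)) :
    ∃ g : V → ℤ, IsSpline G w g ∧ (∀ j ∈ S, g j = 0) ∧ g v0 = ((s.gcd f : ℕ) : ℤ) := by
  classical
  induction s using Finset.induction_on with
  | empty =>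
    refine ⟨0, fun u x _ => by simp, fun j _ => rfl, by simp⟩
  | @insert a s ha ih =>
    obtain ⟨g2, hg2, hz2, hv2⟩ := h a (Finset.mem_insert_self a s)
    obtain ⟨g1, hg1, hz1, hv1⟩ := ih fun b hb => h b (Finset.mem_insert_of_mem hb)
    set A : ℕ := f a
    set B : ℕ := s.gcd f
    refine ⟨fun u => Nat.gcdA A B * g2 u + Nat.gcdB A B * g1 u, ?_, ?_, ?_⟩
    · intro u x hux
      have e : Nat.gcdA A B * g2 u + Nat.gcdB A B * g1 u -
          (Nat.gcdA A B * g2 x + Nat.gcdB A B * g1 x) =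
          Nat.gcdA A B * (g2 u - g2 x) + Nat.gcdB A B * (g1 u - g1 x) := by ring
      rw [e]
      exact dvd_add ((hg2 u x hux).mul_left _) ((hg1 u x hux).mul_left _)
    · intro j hj; simp [hz2 j hj, hz1 j hj]
    · show Nat.gcdA A B * g2 v0 + Nat.gcdB A B * g1 v0 = _
      rw [hv2, hv1, Finset.gcd_insert]
      have : (gcd A B : ℕ) = Nat.gcd A B := rfl
      rw [this, Nat.gcd_eq_gcd_ab]
      ring

lemma exists_spline_lcm (hw : ∀ e ∈ G.edgeSet, 0 < w e) (S : Finset V) (v0 : V) (hv0 : v0 ∉ S) :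
    ∃ g : V → ℤ, IsSpline G w g ∧ (∀ j ∈ S, g j = 0) ∧
      g v0 = ((S.lcm fun j => pathLcm G w v0 j : ℕ) : ℤ) := by
  classical
  set W : ℕ := ∏ e ∈ G.edgeFinset, w e with hWdef
  have hWne : W ≠ 0 := by
    refine Finset.prod_ne_zero_iff.mpr fun e he => ?_
    exact (hw e (SimpleGraph.mem_edgeFinset.mp he)).ne'
  set L : ℕ := S.lcm fun j => pathLcm G w v0 j with hLdef
  have hL : L ∣ W := P_dvd_W hw hv0
  have hLne : L ≠ 0 := P_ne_zero hw hv0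
  have hLfW : L.factorization ≤ W.factorization :=
    (Nat.factorization_le_iff_dvd hLne hWne).mpr hL
  set N : ℕ → ℕ := fun p => p ^ (L.factorization p) * ordCompl[p] W with hNdef
  set F : Finset ℕ := insert 2 W.primeFactors with hFdef
  have hFprime : ∀ p ∈ F, p.Prime := by
    intro p hpF
    rcases Finset.mem_insert.mp hpF with rfl | hp
    · exact Nat.prime_two
    · exact (Nat.mem_primeFactors.mp hp).1
  have hNne : ∀ p ∈ F, N p ≠ 0 := by
    intro p hpF
    have hp := hFprime p hpF
    exact Nat.mul_ne_zero (pow_ne_zero _ hp.ne_zero) (Nat.ordCompl_pos p hWne).ne'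
  have hNfact : ∀ p, p.Prime → ∀ q : ℕ, (N p).factorization q =
      (if q = p then L.factorization p else W.factorization q) := by
    intro p hp q
    rw [hNdef]
    rw [Nat.factorization_mul (pow_ne_zero _ hp.ne_zero) (Nat.ordCompl_pos p hWne).ne']
    rw [hp.factorization_pow, Nat.factorization_ordCompl]
    simp only [Finsupp.coe_add, Pi.add_apply, Finsupp.single_apply, Finsupp.erase_apply]
    by_cases hq : q = p
    · subst hq; simp
    · simp [hq, Ne.symm hq]
  have hLN : ∀ p ∈ F, L ∣ N p := by
    intro p hpF
    have hp := hFprime p hpF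
    rw [← Nat.factorization_le_iff_dvd hLne (hNne p hpF)]
    intro q
    rw [hNfact p hp q]
    by_cases hq : q = p
    · subst hq; simp
    · simp only [if_neg hq]
      exact hLfW q
  have hNW : ∀ p ∈ F, N p ∣ W := by
    intro p hpF
    have := Nat.ordProj_mul_ordCompl_eq_self W p
    calc N p ∣ p ^ (W.factorization p) * ordCompl[p] W :=
          Nat.mul_dvd_mul (pow_dvd_pow p (hLfW p)) dvd_rfl
      _ = W := Nat.ordProj_mul_ordCompl_eq_self W p
  have hgcd : F.gcd N = L := by
    refine Nat.dvd_antisymm ?_ (Finset.dvd_gcd hLN)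
    have hgne : F.gcd N ≠ 0 := by
      intro h0
      exact hNne 2 (Finset.mem_insert_self _ _)
        (Finset.gcd_eq_zero_iff.mp h0 2 (Finset.mem_insert_self _ _))
    rw [← Nat.factorization_le_iff_dvd hgne hLne]
    intro q
    by_cases hq : q.Prime
    · by_cases hqF : q ∈ F
      · have hd : F.gcd N ∣ N q := Finset.gcd_dvd hqF
        have := (Nat.factorization_le_iff_dvd hgne (hNne q hqF)).mpr hd q
        rwa [hNfact q hq q, if_pos rfl] at this
      · have hqW : ¬ q ∣ W := fun hdvd =>
          hqF (Finset.mem_insert_of_mem (Nat.mem_primeFactors.mpr ⟨hq, hdvd, hWne⟩))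
        have h2F : (2 : ℕ) ∈ F := Finset.mem_insert_self 2 _
        have hd : F.gcd N ∣ W := (Finset.gcd_dvd h2F).trans (hNW 2 h2F)
        have h0 : (F.gcd N).factorization q = 0 := Nat.le_zero.mp (by
          have := (Nat.factorization_le_iff_dvd hgne hWne).mpr hd q
          rwa [Nat.factorization_eq_zero_of_not_dvd hqW] at this)
        simp [h0]
    · simp [Nat.factorization_eq_zero_of_not_prime _ hq]
  obtain ⟨g, hg, hz, hval⟩ := exists_spline_gcd S v0 F N (fun p hpF => by
    obtain ⟨g, h1, h2, h3⟩ := exists_spline_prime hw S (hFprime p hpF)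
    exact ⟨g, h1, h2, h3 v0 hv0⟩)
  exact ⟨g, hg, hz, by rw [hval, hgcd]⟩

end FlowupAux

/-- Let `(G, w)` be connected, with vertices enumerated `v_1, …, v_n` (here `v_k` is the element
of `Fin n` with value `k - 1`), and `2 ≤ i ≤ n`. With `L_i = lcm_{1 ≤ j ≤ i-1} D(v_i, v_j)`, the
set of values `g v_i` over splines `g` vanishing at `v_1, …, v_{i-1}` is exactly `L_i · ℤ`. -/
theorem flowup_leading_values (n : ℕ) (G : SimpleGraph (Fin n)) [DecidableRel G.Adj]
    (hG : G.Connected) (w : Sym2 (Fin n) → ℕ) (hw : ∀ e ∈ G.edgeSet, 0 < w e)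
    (i : ℕ) (hi1 : 2 ≤ i) (hi2 : i ≤ n) :
    {c : ℤ | ∃ g : Fin n → ℤ, IsSpline G w g ∧
        (∀ j : Fin n, (j : ℕ) < i - 1 → g j = 0) ∧ g ⟨i - 1, by omega⟩ = c} =
      {c : ℤ | ((((Finset.univ.filter (fun j : Fin n => (j : ℕ) < i - 1)).lcm
          (fun j => pathLcm G w ⟨i - 1, by omega⟩ j)) : ℕ) : ℤ) ∣ c} := by
  classical
  set vi : Fin n := ⟨i - 1, by omega⟩ with hvi
  set S : Finset (Fin n) := Finset.univ.filter (fun j : Fin n => (j : ℕ) < i - 1) with hS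
  have hviS : vi ∉ S := by simp [hS, hvi]
  ext c
  simp only [Set.mem_setOf_eq]
  constructor
  · rintro ⟨g, hg, hz, rfl⟩
    rw [Int.natCast_dvd]
    refine Finset.lcm_dvd fun j hj => ?_
    have hj' : (j : ℕ) < i - 1 := (Finset.mem_filter.mp hj).2
    have hD := FlowupAux.spline_pathLcm_dvd hg vi j
    rw [hz j hj', sub_zero] at hD
    exact Int.natCast_dvd.mp hD
  · intro hc
    obtain ⟨k, hk⟩ := hc
    obtain ⟨g, hg, hz, hval⟩ := FlowupAux.exists_spline_lcm hw S vi hviS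
    refine ⟨fun u => g u * k, ?_, ?_, ?_⟩
    · intro u x hux
      have e : g u * k - g x * k = (g u - g x) * k := by ring
      rw [e]; exact (hg u x hux).mul_right k
    · intro j hj
      show g j * k = 0
      rw [hz j (by simp [hS, hj]), zero_mul]
    · show g vi * k = c
      rw [hval, hk]
end

section
/- Let (G, w) be an edge-weighted simple graph on vertices enumerated v_1, …, v_n. For each 0 ≤ i ≤ n − 1 suppose B_i is a minimal element of the flow-up class F_i, i.e. B_i ∈ F_i, B_i(v_{i+1}) > 0, and B_i(v_{i+1}) ≤ |F(v_{i+1})| for every F ∈ F_i. Then {B_0, B_1, …, B_{n−1}} is a ℤ-module basis of the spline module S_G. -/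
/-- The ℤ-module of integer splines on `(G, w)`, as a submodule of `V → ℤ`. -/
def splineSubmodule {V : Type*} (G : SimpleGraph V) (w : Sym2 V → ℕ) :
    Submodule ℤ (V → ℤ) where
  carrier := {g | IsSpline G w g}
  add_mem' := by
    intro a b ha hb u x hux
    simpa [sub_add_sub_comm] using dvd_add (ha u x hux) (hb u x hux)
  zero_mem' := by intro u x hux; simp
  smul_mem' := by
    intro c g hg u x hux
    simpa [mul_sub] using (hg u x hux).mul_left c

/-!
Only the submodule structure of the splines matters. Minimal flow-up elements form an upper
triangular family with nonzero diagonal, hence are linearly independent. They span: if `g`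
vanishes at `v_1, …, v_i`, subtracting `(g v_{i+1} / B_i v_{i+1}) • B_i` leaves an element of
`F_i ∪ {0}` whose value at `v_{i+1}` is the remainder `g v_{i+1} % B_i v_{i+1}`, which is
smaller than the minimal leading term and therefore zero; so one more vertex is cleared.
-/

open Submodule Set

theorem Matrix.linearIndependent_rows_of_isUpperTriangular {ι R : Type*} [Fintype ι]
    [LinearOrder ι] [CommRing R] [IsDomain R] {A : Matrix ι ι R} (hA : A.IsUpperTriangular)
    (hdiag : ∀ i, A i i ≠ 0) : LinearIndependent R fun i ↦ A i := by
  refine Matrix.linearIndependent_rows_of_det_ne_zero ?_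
  rw [Matrix.det_of_isUpperTriangular hA]
  exact Finset.prod_ne_zero_iff.2 fun i _ ↦ hdiag i

structure IsMinimalFlowUpFamily {n : ℕ} (S : Submodule ℤ (Fin n → ℤ))
    (B : Fin n → Fin n → ℤ) : Prop where
  mem : ∀ i, B i ∈ S
  apply_of_lt : ∀ i j, j < i → B i j = 0
  apply_self_pos : ∀ i, 0 < B i i
  apply_self_le : ∀ i, ∀ g ∈ S, (∀ j < i, g j = 0) → g i ≠ 0 → B i i ≤ |g i|

namespace IsMinimalFlowUpFamily

variable {n : ℕ} {S : Submodule ℤ (Fin n → ℤ)} {B : Fin n → Fin n → ℤ}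

theorem sub_ediv_smul_apply_of_le (hB : IsMinimalFlowUpFamily S B) {g : Fin n → ℤ}
    (hg : g ∈ S) {i : Fin n} (hgi : ∀ j < i, g j = 0) :
    ∀ j ≤ i, (g - (g i / B i i) • B i) j = 0 := by
  set h := g - (g i / B i i) • B i
  have hS : h ∈ S := S.sub_mem hg (S.smul_mem _ (hB.mem i))
  have hlt : ∀ j < i, h j = 0 := fun j hj ↦ by
    simp [h, hgi j hj, hB.apply_of_lt i j hj]
  have hmod : h i = g i % B i i := by
    simp only [h, Pi.sub_apply, Pi.smul_apply, smul_eq_mul, Int.emod_def, mul_comm]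
  have hi : h i = 0 := by
    by_contra hne
    have hle := hB.apply_self_le i h hS hlt hne
    have hnonneg : 0 ≤ h i := hmod ▸ Int.emod_nonneg _ (hB.apply_self_pos i).ne'
    have hsmall : h i < B i i := hmod ▸ Int.emod_lt_of_pos _ (hB.apply_self_pos i)
    rw [abs_of_nonneg hnonneg] at hle
    omega
  intro j hj
  rcases hj.lt_or_eq with hj | rfl
  exacts [hlt j hj, hi]

theorem mem_span_of_apply_eq_zero (hB : IsMinimalFlowUpFamily S B) {k : ℕ} (hk : k ≤ n) :
    ∀ g ∈ S, (∀ j : Fin n, (j : ℕ) < k → g j = 0) → g ∈ span ℤ (range B) := by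
  induction hk using Nat.decreasingInduction with
  | self =>
    intro g _ hg
    rw [funext fun j ↦ hg j j.isLt]
    exact zero_mem _
  | of_succ k hk ih =>
    intro g hgS hg
    let i : Fin n := ⟨k, hk⟩
    have hrest : g - (g i / B i i) • B i ∈ span ℤ (range B) := by
      refine ih _ (S.sub_mem hgS (S.smul_mem _ (hB.mem i))) fun j hj ↦ ?_
      exact hB.sub_ediv_smul_apply_of_le hgS hg j (Nat.lt_succ_iff.1 hj)
    simpa using add_mem hrest (smul_mem _ (g i / B i i) (subset_span (mem_range_self i)))

theorem span_eq (hB : IsMinimalFlowUpFamily S B) : span ℤ (range B) = S := by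
  refine le_antisymm (span_le.2 ?_) fun g hg ↦ ?_
  · rintro _ ⟨i, rfl⟩
    exact hB.mem i
  · exact hB.mem_span_of_apply_eq_zero (Nat.zero_le n) g hg fun _ h ↦
      absurd h (Nat.not_lt_zero _)

theorem linearIndependent (hB : IsMinimalFlowUpFamily S B) : LinearIndependent ℤ B :=
  Matrix.linearIndependent_rows_of_isUpperTriangular (A := Matrix.of B)
    (fun i j hji ↦ hB.apply_of_lt i j hji) fun i ↦ (hB.apply_self_pos i).ne'

noncomputable def basis (hB : IsMinimalFlowUpFamily S B) : Module.Basis (Fin n) ℤ S :=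
  (Module.Basis.span hB.linearIndependent).map (LinearEquiv.ofEq _ _ hB.span_eq)

@[simp]
theorem coe_basis_apply (hB : IsMinimalFlowUpFamily S B) (i : Fin n) :
    (hB.basis i : Fin n → ℤ) = B i := by
  simp [basis]

end IsMinimalFlowUpFamily

theorem minimal_flowup_basis_general (n : ℕ) (G : SimpleGraph (Fin n)) (w : Sym2 (Fin n) → ℕ)
    (B : Fin n → (Fin n → ℤ))
    (hspline : ∀ i, IsSpline G w (B i))
    (hzero : ∀ i j : Fin n, j < i → B i j = 0)
    (hpos : ∀ i, 0 < B i i)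
    (hmin : ∀ i : Fin n, ∀ g : Fin n → ℤ, IsSpline G w g →
      (∀ j : Fin n, j < i → g j = 0) → g i ≠ 0 → B i i ≤ |g i|) :
    ∃ b : Module.Basis (Fin n) ℤ (splineSubmodule G w), ∀ i, (b i : Fin n → ℤ) = B i :=
  let hB : IsMinimalFlowUpFamily (splineSubmodule G w) B := ⟨hspline, hzero, hpos, hmin⟩
  ⟨hB.basis, hB.coe_basis_apply⟩

/-- If for each `0 ≤ i ≤ n - 1` the spline `B i` is a minimal element of the flow-up class
`F_i` (i.e. `B i` vanishes at `v_1, …, v_i`, its leading term `B i v_{i+1}` is positive, and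
`B i v_{i+1} ≤ |F v_{i+1}|` for every `F ∈ F_i`), then `{B 0, …, B (n-1)}` is a ℤ-module basis
of the spline module `S_G`.  (Vertices enumerated as `Fin n`, with `v_{k+1}` of value `k`.) -/
theorem minimal_flowup_basis (n : ℕ) (G : SimpleGraph (Fin n)) (w : Sym2 (Fin n) → ℕ)
    (hw : ∀ e ∈ G.edgeSet, 0 < w e)
    (B : Fin n → (Fin n → ℤ))
    (hspline : ∀ i, IsSpline G w (B i))
    (hzero : ∀ i j : Fin n, j < i → B i j = 0)
    (hpos : ∀ i, 0 < B i i)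
    (hmin : ∀ i : Fin n, ∀ g : Fin n → ℤ, IsSpline G w g →
      (∀ j : Fin n, j < i → g j = 0) → g i ≠ 0 → B i i ≤ |g i|) :
    ∃ b : Module.Basis (Fin n) ℤ (splineSubmodule G w), ∀ i, (b i : Fin n → ℤ) = B i :=
  minimal_flowup_basis_general n G w B hspline hzero hpos hmin
end
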